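/- There exist constants C_1, C_2 > 0, depending only on L̃ and r, such that for every integer m ≥ 1, every F ∈ ℂ^{N×m} and every t > 0: C_1 · 𝒲_r(F, t) ≤ 𝒦_r(F, t) ≤ C_2 · 𝒲_r(F, t). -/

import Mathlib

open Matrix

noncomputable section

/-- Euclidean (2-)norm on `ℂ^N`. -/
def cnorm2 {N : ℕ} (f : Fin N → ℂ) : ℝ := Real.sqrt (∑ i, ‖f i‖ ^ 2)

/-- The spectral operator `Σ_j c_j u_j u_j^*`. -/
def specOp {N : ℕ} (u : Fin N → Fin N → ℂ) (c : Fin N → ℂ) : Matrix (Fin N) (Fin N) ℂ :=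
  ∑ j, c j • Matrix.vecMulVec (u j) (star (u j))

/-- The graph translation operator `T_s = Σ_j e^{i s √λ_j} u_j u_j^*`. -/
def Tmat {N : ℕ} (u : Fin N → Fin N → ℂ) (lam : Fin N → ℝ) (s : ℝ) :
    Matrix (Fin N) (Fin N) ℂ :=
  specOp u (fun j => Complex.exp (Complex.I * (s : ℂ) * (Real.sqrt (lam j) : ℂ)))

/-- The `r`-th modulus of smoothness `ω_r(f,t) = sup_{|s| ≤ t} ‖(T_s - I)^r f‖₂`. -/
def omegaMod {N : ℕ} (u : Fin N → Fin N → ℂ) (lam : Fin N → ℝ) (r : ℕ) (f : Fin N → ℂ)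
    (t : ℝ) : ℝ :=
  ⨆ s : {s : ℝ // |s| ≤ t}, cnorm2 (((Tmat u lam s.1 - 1) ^ r).mulVec f)

/-- Functional calculus power `L^x = Σ_j λ_j^x u_j u_j^*` (with `0^0 = 1`). -/
def Lpow {N : ℕ} (u : Fin N → Fin N → ℂ) (lam : Fin N → ℝ) (x : ℝ) :
    Matrix (Fin N) (Fin N) ℂ :=
  specOp u (fun j => ((lam j ^ x : ℝ) : ℂ))

/-- Multichannel modulus of smoothness `𝒲_r(F, t) = Σ_{j=1}^m ω_r(f_j, t)`
(sum over the columns `f_j` of `F`). -/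
def Wcal {N m : ℕ} (u : Fin N → Fin N → ℂ) (lam : Fin N → ℝ) (r : ℕ)
    (F : Matrix (Fin N) (Fin m) ℂ) (t : ℝ) : ℝ :=
  ∑ j, omegaMod u lam r (fun i => F i j) t

/-- Multichannel `K`-functional
`𝒦_r(F, t) = inf_{g_1, …, g_m} ( Σ_j ‖f_j - g_j‖₂ + (t/2)^r Σ_j ‖L^{r/2} g_j‖₂ )`. -/
def Kcal {N m : ℕ} (u : Fin N → Fin N → ℂ) (lam : Fin N → ℝ) (r : ℕ)
    (F : Matrix (Fin N) (Fin m) ℂ) (t : ℝ) : ℝ :=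
  ⨅ G : Matrix (Fin N) (Fin m) ℂ,
    (∑ j, cnorm2 (fun i => F i j - G i j) +
      (t / 2) ^ r * ∑ j, cnorm2 ((Lpow u lam ((r : ℝ) / 2)).mulVec (fun i => G i j)))


lemma vmv_mul_vmv {N : ℕ} (a b c d : Fin N → ℂ) :
    Matrix.vecMulVec a b * Matrix.vecMulVec c d = (b ⬝ᵥ c) • Matrix.vecMulVec a d := by
  ext i j
  simp only [Matrix.mul_apply, Matrix.vecMulVec_apply, Matrix.smul_apply, dotProduct,
    smul_eq_mul, Finset.sum_mul]
  exact Finset.sum_congr rfl fun k _ => by ring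

section

variable {N : ℕ} (v : Fin N → Fin N → ℂ)
  (hv : ∀ i j, star (v i) ⬝ᵥ v j = if i = j then 1 else 0)

include hv

lemma specOp_mul (c d : Fin N → ℂ) :
    specOp v c * specOp v d = specOp v (c * d) := by
  unfold specOp
  rw [Finset.sum_mul]
  have hmain : ∀ j, (c j • Matrix.vecMulVec (v j) (star (v j))) * ∑ k, d k • Matrix.vecMulVec (v k) (star (v k))
      = ((c * d) j) • Matrix.vecMulVec (v j) (star (v j)) := by
    intro j
    rw [Finset.mul_sum]
    have hjk : ∀ k, (c j • Matrix.vecMulVec (v j) (star (v j))) * (d k • Matrix.vecMulVec (v k) (star (v k)))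
        = if j = k then (c j * d j) • Matrix.vecMulVec (v j) (star (v j)) else 0 := by
      intro k
      rw [smul_mul_smul_comm, vmv_mul_vmv, hv j k]
      split_ifs with h
      · subst h; simp [smul_smul]
      · simp
    simp only [hjk, Finset.sum_ite_eq, Finset.mem_univ, if_true, Pi.mul_apply]
  simp only [hmain]

lemma specOp_one : specOp v 1 = 1 := by
  classical
  set V : Matrix (Fin N) (Fin N) ℂ := Matrix.of fun i j => star (v i j) with hV
  have h1 : V * Vᴴ = 1 := by
    ext i j
    have := hv i j
    simpa [Matrix.mul_apply, Matrix.conjTranspose_apply, dotProduct, hV,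
      Matrix.one_apply] using this
  have h2 : Vᴴ * V = 1 := mul_eq_one_comm.mp h1
  ext k l
  have := congrFun (congrFun h2 k) l
  simp only [Matrix.mul_apply, Matrix.conjTranspose_apply, hV, Matrix.of_apply] at this
  simpa [specOp, Matrix.sum_apply, Matrix.vecMulVec_apply, Pi.one_apply, mul_comm] using this

omit hv in
lemma specOp_sub (c d : Fin N → ℂ) : specOp v (c - d) = specOp v c - specOp v d := by
  unfold specOp
  rw [← Finset.sum_sub_distrib]
  exact Finset.sum_congr rfl fun j _ => by rw [Pi.sub_apply, sub_smul]

lemma specOp_pow (c : Fin N → ℂ) (r : ℕ) : (specOp v c) ^ r = specOp v (c ^ r) := by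
  induction r with
  | zero => simpa using (specOp_one v hv).symm
  | succ n ih => rw [pow_succ, ih, specOp_mul v hv, ← pow_succ]

omit hv in
lemma specOp_mulVec (c : Fin N → ℂ) (f : Fin N → ℂ) :
    specOp v c *ᵥ f = fun i => ∑ j, (c j * (star (v j) ⬝ᵥ f)) * v j i := by
  funext i
  simp only [Matrix.mulVec, dotProduct, specOp, Matrix.sum_apply, Matrix.smul_apply,
    Matrix.vecMulVec_apply, smul_eq_mul, Pi.star_apply, Finset.sum_mul, Finset.mul_sum]
  rw [Finset.sum_comm]
  exact Finset.sum_congr rfl fun j _ => Finset.sum_congr rfl fun k _ => by ring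

lemma dot_expand (a b : Fin N → ℂ) :
    star (fun i => ∑ j, a j * v j i) ⬝ᵥ (fun i => ∑ j, b j * v j i)
      = ∑ j, star (a j) * b j := by
  simp only [dotProduct, Pi.star_apply, star_sum, star_mul']
  have h1 : ∀ x, (∑ j, star (a j) * star (v j x)) * ∑ k, b k * v k x
      = ∑ j, ∑ k, (star (a j) * b k) * (star (v j x) * v k x) := by
    intro x
    rw [Finset.sum_mul_sum]
    exact Finset.sum_congr rfl fun j _ => Finset.sum_congr rfl fun k _ => by ring
  simp only [h1]
  rw [Finset.sum_comm]
  have h2 : ∀ j, (∑ x, ∑ k, (star (a j) * b k) * (star (v j x) * v k x))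
      = ∑ k, (star (a j) * b k) * (star (v j) ⬝ᵥ v k) := by
    intro j
    rw [Finset.sum_comm]
    exact Finset.sum_congr rfl fun k _ => by
      rw [dotProduct, Finset.mul_sum]
      exact Finset.sum_congr rfl fun x _ => by simp [Pi.star_apply]
  simp only [h2, hv, mul_ite, mul_one, mul_zero, Finset.sum_ite_eq, Finset.mem_univ, if_true]

lemma cnorm2_expand (a : Fin N → ℂ) :
    cnorm2 (fun i => ∑ j, a j * v j i) = Real.sqrt (∑ j, ‖a j‖ ^ 2) := by
  have hd := dot_expand v hv a a
  have hz : ∀ z : ℂ, ((‖z‖ : ℂ) ^ 2) = star z * z := fun z => by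
    rw [mul_comm, Complex.star_def, Complex.mul_conj]
    norm_cast
    rw [Complex.normSq_eq_norm_sq]

  unfold cnorm2
  congr 1
  have h2 : ((∑ i, ‖∑ j, a j * v j i‖ ^ 2 : ℝ) : ℂ) = ((∑ j, ‖a j‖ ^ 2 : ℝ) : ℂ) := by
    push_cast
    simp only [hz]
    exact hd
  exact_mod_cast h2

lemma cnorm2_specOp (c : Fin N → ℂ) (f : Fin N → ℂ) :
    cnorm2 (specOp v c *ᵥ f) = Real.sqrt (∑ j, ‖c j‖ ^ 2 * ‖star (v j) ⬝ᵥ f‖ ^ 2) := by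
  rw [specOp_mulVec v, cnorm2_expand v hv]
  congr 1
  exact Finset.sum_congr rfl fun j _ => by rw [norm_mul, mul_pow]

lemma parseval (f : Fin N → ℂ) :
    cnorm2 f = Real.sqrt (∑ j, ‖star (v j) ⬝ᵥ f‖ ^ 2) := by
  have h := cnorm2_specOp v hv 1 f
  simpa [specOp_one v hv, Matrix.one_mulVec] using h

end

lemma cnorm2_eq_norm {N : ℕ} (f : Fin N → ℂ) :
    cnorm2 f = ‖(WithLp.equiv 2 (Fin N → ℂ)).symm f‖ := by
  rw [EuclideanSpace.norm_eq]
  rfl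

lemma cnorm2_nonneg {N : ℕ} (f : Fin N → ℂ) : 0 ≤ cnorm2 f := Real.sqrt_nonneg _

lemma cnorm2_add_le {N : ℕ} (f g : Fin N → ℂ) : cnorm2 (f + g) ≤ cnorm2 f + cnorm2 g := by
  simp only [cnorm2_eq_norm]
  rw [show (WithLp.equiv 2 (Fin N → ℂ)).symm (f + g)
    = (WithLp.equiv 2 (Fin N → ℂ)).symm f + (WithLp.equiv 2 (Fin N → ℂ)).symm g from rfl]
  exact norm_add_le _ _

lemma exp_norm_sq (x : ℝ) : ‖Complex.exp ((x : ℂ) * Complex.I) - 1‖ ^ 2 = 2 - 2 * Real.cos x := by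
  rw [Complex.exp_mul_I, Complex.sq_norm, Complex.normSq_apply]
  simp only [Complex.add_re, Complex.sub_re, Complex.ofReal_re, Complex.mul_re,
    Complex.I_re, Complex.I_im, Complex.ofReal_im, Complex.one_re, Complex.add_im,
    Complex.sub_im, Complex.mul_im, Complex.one_im, Complex.cos_ofReal_re,
    Complex.sin_ofReal_re, Complex.sin_ofReal_im, Complex.cos_ofReal_im]
  have := Real.sin_sq_add_cos_sq x
  push_cast
  nlinarith [this]

lemma exp_norm_le_abs (x : ℝ) : ‖Complex.exp ((x : ℂ) * Complex.I) - 1‖ ≤ |x| := by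
  have h1 : ‖Complex.exp ((x : ℂ) * Complex.I) - 1‖ ^ 2 ≤ x ^ 2 := by
    rw [exp_norm_sq]
    have := Real.one_sub_sq_div_two_le_cos (x := x)
    linarith
  have h2 := Real.sqrt_le_sqrt h1
  rwa [Real.sqrt_sq (norm_nonneg _), Real.sqrt_sq_eq_abs] at h2

lemma exp_norm_le_two (x : ℝ) : ‖Complex.exp ((x : ℂ) * Complex.I) - 1‖ ≤ 2 := by
  have h := norm_sub_le (Complex.exp ((x : ℂ) * Complex.I)) 1
  have : ‖Complex.exp ((x : ℂ) * Complex.I)‖ = 1 := by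
    exact Complex.norm_exp_ofReal_mul_I x
  rw [this] at h
  norm_num at h
  exact h

lemma exp_norm_ge (x : ℝ) (h0 : 0 ≤ x) (h2 : x ≤ 2) :
    3 / 4 * x ≤ ‖Complex.exp ((x : ℂ) * Complex.I) - 1‖ := by
  have hsin : 3 / 4 * (x / 2) ≤ Real.sin (x / 2) := by
    rcases eq_or_lt_of_le h0 with h | h
    · simp [← h]
    · have hy : 0 < x / 2 := by linarith
      have hy1 : x / 2 ≤ 1 := by linarith
      have hs := Real.sin_gt_sub_cube hy
      have hcube : (x / 2) ^ 3 ≤ x / 2 := by nlinarith [sq_nonneg (x / 2)]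
      linarith
  have hkey : (3 / 4 * x) ^ 2 ≤ ‖Complex.exp ((x : ℂ) * Complex.I) - 1‖ ^ 2 := by
    rw [exp_norm_sq]
    have hid : Real.sin (x / 2) ^ 2 = 1 / 2 - Real.cos (2 * (x / 2)) / 2 :=
      Real.sin_sq_eq_half_sub _
    rw [show 2 * (x / 2) = x by ring] at hid
    nlinarith [hsin, Real.sin_sq_add_cos_sq (x / 2)]
  have h3 := Real.sqrt_le_sqrt hkey
  rwa [Real.sqrt_sq (by positivity), Real.sqrt_sq (norm_nonneg _)] at h3

lemma sqrt_factor (c : ℝ) (hc : 0 ≤ c) (x : ℝ) :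
    Real.sqrt (c ^ 2 * x) = c * Real.sqrt x := by
  rw [Real.sqrt_mul (by positivity), Real.sqrt_sq hc]

section
variable {N : ℕ} (v : Fin N → Fin N → ℂ)
  (hv : ∀ i j, star (v i) ⬝ᵥ v j = if i = j then 1 else 0)
  (nu : Fin N → ℝ) (hnu : ∀ j, 0 ≤ nu j)

include hv

lemma Tpow_eq (s : ℝ) (r : ℕ) :
    (Tmat v nu s - 1) ^ r
      = specOp v (fun j => (Complex.exp (((s * Real.sqrt (nu j) : ℝ) : ℂ) * Complex.I) - 1) ^ r) := by
  have hphase : ∀ j, Complex.I * (s : ℂ) * ((Real.sqrt (nu j) : ℝ) : ℂ)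
      = ((s * Real.sqrt (nu j) : ℝ) : ℂ) * Complex.I := by
    intro j; push_cast; ring
  have h1 : Tmat v nu s - 1
      = specOp v (fun j => Complex.exp (((s * Real.sqrt (nu j) : ℝ) : ℂ) * Complex.I) - 1) := by
    have : Tmat v nu s
        = specOp v (fun j => Complex.exp (((s * Real.sqrt (nu j) : ℝ) : ℂ) * Complex.I)) := by
      unfold Tmat
      simp only [hphase]
    rw [this, ← specOp_one v hv, ← specOp_sub]
    rfl
  rw [h1, specOp_pow v hv]
  rfl

lemma omega_term_eq (s : ℝ) (r : ℕ) (f : Fin N → ℂ) :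
    cnorm2 (((Tmat v nu s - 1) ^ r) *ᵥ f)
      = Real.sqrt (∑ j, (‖Complex.exp (((s * Real.sqrt (nu j) : ℝ) : ℂ) * Complex.I) - 1‖ ^ 2) ^ r
          * ‖star (v j) ⬝ᵥ f‖ ^ 2) := by
  rw [Tpow_eq v hv nu s r, cnorm2_specOp v hv]
  congr 1
  refine Finset.sum_congr rfl fun j _ => ?_
  rw [norm_pow, ← pow_mul, ← pow_mul, mul_comm 2 r]

include hnu in
lemma Lpow_term_eq (r : ℕ) (g : Fin N → ℂ) :
    cnorm2 ((Lpow v nu ((r : ℝ) / 2)) *ᵥ g)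
      = Real.sqrt (∑ j, (nu j) ^ r * ‖star (v j) ⬝ᵥ g‖ ^ 2) := by
  unfold Lpow
  rw [cnorm2_specOp v hv]
  congr 1
  refine Finset.sum_congr rfl fun j _ => ?_
  congr 1
  rw [Complex.norm_real, Real.norm_eq_abs, abs_of_nonneg (Real.rpow_nonneg (hnu j) _), ← Real.rpow_natCast (nu j ^ ((r:ℝ)/2)) 2,
    ← Real.rpow_mul (hnu j), show ((r:ℝ)/2 * ((2:ℕ):ℝ)) = ((r:ℕ):ℝ) by push_cast; ring,
    Real.rpow_natCast]

end

section
variable {N : ℕ} (v : Fin N → Fin N → ℂ)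
  (hv : ∀ i j, star (v i) ⬝ᵥ v j = if i = j then 1 else 0)
  (nu : Fin N → ℝ) (hnu : ∀ j, 0 ≤ nu j)

include hv

lemma omega_pointwise_le (s : ℝ) (r : ℕ) (f : Fin N → ℂ) :
    cnorm2 (((Tmat v nu s - 1) ^ r) *ᵥ f) ≤ 2 ^ r * cnorm2 f := by
  rw [omega_term_eq v hv nu, parseval v hv f]
  have hterm : ∀ j ∈ Finset.univ,
      (‖Complex.exp (((s * Real.sqrt (nu j) : ℝ) : ℂ) * Complex.I) - 1‖ ^ 2) ^ r
        * ‖star (v j) ⬝ᵥ f‖ ^ 2 ≤ ((2:ℝ) ^ r) ^ 2 * ‖star (v j) ⬝ᵥ f‖ ^ 2 := by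
    intro j _
    have h1 : ‖Complex.exp (((s * Real.sqrt (nu j) : ℝ) : ℂ) * Complex.I) - 1‖ ^ 2 ≤ 4 :=
by
      have hA := exp_norm_le_two (s * Real.sqrt (nu j))
      have hB := norm_nonneg (Complex.exp (((s * Real.sqrt (nu j) : ℝ) : ℂ) * Complex.I) - 1)
      nlinarith
    have h2 : (‖Complex.exp (((s * Real.sqrt (nu j) : ℝ) : ℂ) * Complex.I) - 1‖ ^ 2) ^ r
        ≤ (4:ℝ) ^ r := pow_le_pow_left₀ (by positivity) h1 r
    have h3 : ((2:ℝ) ^ r) ^ 2 = (4:ℝ) ^ r := by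
      rw [← pow_mul, mul_comm, pow_mul]; norm_num
    rw [h3]
    exact mul_le_mul_of_nonneg_right h2 (by positivity)
  calc Real.sqrt (∑ j, (‖Complex.exp (((s * Real.sqrt (nu j) : ℝ) : ℂ) * Complex.I) - 1‖ ^ 2) ^ r
          * ‖star (v j) ⬝ᵥ f‖ ^ 2)
      ≤ Real.sqrt (∑ j, ((2:ℝ) ^ r) ^ 2 * ‖star (v j) ⬝ᵥ f‖ ^ 2) :=
        Real.sqrt_le_sqrt (Finset.sum_le_sum hterm)
    _ = 2 ^ r * Real.sqrt (∑ j, ‖star (v j) ⬝ᵥ f‖ ^ 2) := by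
        rw [← Finset.mul_sum, sqrt_factor _ (by positivity)]

lemma omega_nonneg (r : ℕ) (f : Fin N → ℂ) (t : ℝ) : 0 ≤ omegaMod v nu r f t :=
  Real.iSup_nonneg fun _ => cnorm2_nonneg _

include hnu in
lemma omega_le_split (r : ℕ) (t : ℝ) (ht : 0 < t) (f g : Fin N → ℂ) :
    omegaMod v nu r f t
      ≤ 2 ^ r * (cnorm2 (f - g) + (t/2) ^ r * cnorm2 ((Lpow v nu ((r : ℝ) / 2)) *ᵥ g)) := by
  haveI : Nonempty {s : ℝ // |s| ≤ t} := ⟨⟨0, by simpa using ht.le⟩⟩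
  apply ciSup_le
  rintro ⟨s, hs⟩
  have hsplit : ((Tmat v nu s - 1) ^ r) *ᵥ f
      = ((Tmat v nu s - 1) ^ r) *ᵥ (f - g) + ((Tmat v nu s - 1) ^ r) *ᵥ g := by
    rw [← Matrix.mulVec_add, sub_add_cancel]
  have hb2 : cnorm2 (((Tmat v nu s - 1) ^ r) *ᵥ g)
      ≤ t ^ r * cnorm2 ((Lpow v nu ((r : ℝ) / 2)) *ᵥ g) := by
    rw [omega_term_eq v hv nu, Lpow_term_eq v hv nu hnu]
    have hterm : ∀ j ∈ Finset.univ,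
        (‖Complex.exp (((s * Real.sqrt (nu j) : ℝ) : ℂ) * Complex.I) - 1‖ ^ 2) ^ r
          * ‖star (v j) ⬝ᵥ g‖ ^ 2
        ≤ (t ^ r) ^ 2 * ((nu j) ^ r * ‖star (v j) ⬝ᵥ g‖ ^ 2) := by
      intro j _
      have h1 : ‖Complex.exp (((s * Real.sqrt (nu j) : ℝ) : ℂ) * Complex.I) - 1‖ ^ 2
          ≤ t ^ 2 * nu j := by
        have ha := exp_norm_le_abs (s * Real.sqrt (nu j))
        have hb : |s * Real.sqrt (nu j)| ^ 2 = s ^ 2 * nu j := by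
          rw [sq_abs, mul_pow, Real.sq_sqrt (hnu j)]
        have hc : s ^ 2 ≤ t ^ 2 := by
          have := abs_nonneg s
          nlinarith [sq_abs s]
        have hB := norm_nonneg (Complex.exp (((s * Real.sqrt (nu j) : ℝ) : ℂ) * Complex.I) - 1)
        have hC := abs_nonneg (s * Real.sqrt (nu j))
        nlinarith [Real.sqrt_nonneg (nu j), hnu j]
      calc (‖Complex.exp (((s * Real.sqrt (nu j) : ℝ) : ℂ) * Complex.I) - 1‖ ^ 2) ^ r
            * ‖star (v j) ⬝ᵥ g‖ ^ 2
          ≤ (t ^ 2 * nu j) ^ r * ‖star (v j) ⬝ᵥ g‖ ^ 2 :=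
            mul_le_mul_of_nonneg_right (pow_le_pow_left₀ (by positivity) h1 r) (by positivity)
        _ = (t ^ r) ^ 2 * ((nu j) ^ r * ‖star (v j) ⬝ᵥ g‖ ^ 2) := by
            rw [mul_pow, ← pow_mul, ← pow_mul, mul_comm 2 r, mul_assoc]
    calc Real.sqrt (∑ j, (‖Complex.exp (((s * Real.sqrt (nu j) : ℝ) : ℂ) * Complex.I) - 1‖ ^ 2) ^ r
            * ‖star (v j) ⬝ᵥ g‖ ^ 2)
        ≤ Real.sqrt (∑ j, (t ^ r) ^ 2 * ((nu j) ^ r * ‖star (v j) ⬝ᵥ g‖ ^ 2)) :=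
          Real.sqrt_le_sqrt (Finset.sum_le_sum hterm)
      _ = t ^ r * Real.sqrt (∑ j, (nu j) ^ r * ‖star (v j) ⬝ᵥ g‖ ^ 2) := by
          rw [← Finset.mul_sum, sqrt_factor _ (by positivity)]
  calc cnorm2 (((Tmat v nu s - 1) ^ r) *ᵥ f)
      ≤ cnorm2 (((Tmat v nu s - 1) ^ r) *ᵥ (f - g)) + cnorm2 (((Tmat v nu s - 1) ^ r) *ᵥ g) := by
        rw [hsplit]; exact cnorm2_add_le _ _
    _ ≤ 2 ^ r * cnorm2 (f - g) + t ^ r * cnorm2 ((Lpow v nu ((r : ℝ) / 2)) *ᵥ g) :=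
        add_le_add (omega_pointwise_le v hv nu s r (f - g)) hb2
    _ = 2 ^ r * (cnorm2 (f - g) + (t/2) ^ r * cnorm2 ((Lpow v nu ((r : ℝ) / 2)) *ᵥ g)) := by
        have : (t : ℝ) ^ r = 2 ^ r * (t / 2) ^ r := by
          rw [← mul_pow]; congr 1; ring
        rw [this]; ring

lemma coef_expand (a : Fin N → ℂ) (k : Fin N) :
    star (v k) ⬝ᵥ (fun i => ∑ j, a j * v j i) = a k := by
  simp only [dotProduct, Pi.star_apply]
  have h1 : ∀ i, star (v k i) * ∑ j, a j * v j i
      = ∑ j, a j * (star (v k i) * v j i) := by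
    intro i
    rw [Finset.mul_sum]
    exact Finset.sum_congr rfl fun j _ => by ring
  simp only [h1]
  rw [Finset.sum_comm]
  have h2 : ∀ j, (∑ i, a j * (star (v k i) * v j i)) = a j * (star (v k) ⬝ᵥ v j) := by
    intro j
    rw [← Finset.mul_sum]
    rfl
  simp only [h2, hv, mul_ite, mul_one, mul_zero, Finset.sum_ite_eq, Finset.mem_univ, if_true]

lemma coef_specOp (c f : Fin N → ℂ) (k : Fin N) :
    star (v k) ⬝ᵥ (specOp v c *ᵥ f) = c k * (star (v k) ⬝ᵥ f) := by
  rw [specOp_mulVec v]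
  exact coef_expand v hv _ k

lemma omega_bdd (r : ℕ) (t : ℝ) (f : Fin N → ℂ) :
    BddAbove (Set.range fun s : {s : ℝ // |s| ≤ t} =>
      cnorm2 (((Tmat v nu s.1 - 1) ^ r) *ᵥ f)) := by
  refine ⟨2 ^ r * cnorm2 f, ?_⟩
  rintro x ⟨s, rfl⟩
  exact omega_pointwise_le v hv nu s.1 r f

include hnu in
lemma K_choice (r : ℕ) (t : ℝ) (ht : 0 < t) (f : Fin N → ℂ) :
    ∃ g : Fin N → ℂ,
      cnorm2 (f - g) + (t/2) ^ r * cnorm2 ((Lpow v nu ((r : ℝ) / 2)) *ᵥ g)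
        ≤ 2 * Real.sqrt (∑ j, (min 1 (t * Real.sqrt (nu j) / 2)) ^ (2*r)
            * ‖star (v j) ⬝ᵥ f‖ ^ 2) := by
  classical
  set ind : Fin N → ℂ := fun j => if t * Real.sqrt (nu j) ≤ 2 then 1 else 0 with hind
  refine ⟨specOp v ind *ᵥ f, ?_⟩
  set M := Real.sqrt (∑ j, (min 1 (t * Real.sqrt (nu j) / 2)) ^ (2*r)
      * ‖star (v j) ⬝ᵥ f‖ ^ 2) with hM
  have hfg : f - specOp v ind *ᵥ f = specOp v (1 - ind) *ᵥ f := by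
    rw [specOp_sub, Matrix.sub_mulVec, specOp_one v hv, Matrix.one_mulVec]
  have hpart1 : cnorm2 (f - specOp v ind *ᵥ f) ≤ M := by
    rw [hfg, cnorm2_specOp v hv, hM]
    apply Real.sqrt_le_sqrt
    apply Finset.sum_le_sum
    intro j _
    by_cases h : t * Real.sqrt (nu j) ≤ 2
    · simp only [hind, Pi.sub_apply, Pi.one_apply, if_pos h, sub_self, norm_zero]
      have h0 : ((0:ℝ)) ^ 2 * ‖star (v j) ⬝ᵥ f‖ ^ 2 = 0 := by ring
      rw [h0]
      positivity
    · have hmin : min 1 (t * Real.sqrt (nu j) / 2) = 1 := by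
        rw [min_eq_left]; linarith [not_le.mp h]
      simp only [hind, Pi.sub_apply, Pi.one_apply, if_neg h, sub_zero, hmin,
        one_pow, norm_one]
      exact le_rfl
  have hpart2 : (t/2) ^ r * cnorm2 ((Lpow v nu ((r : ℝ) / 2)) *ᵥ (specOp v ind *ᵥ f)) ≤ M := by
    rw [Lpow_term_eq v hv nu hnu]
    have hfact : (t/2) ^ r * Real.sqrt (∑ j, (nu j) ^ r * ‖star (v j) ⬝ᵥ (specOp v ind *ᵥ f)‖ ^ 2)
        = Real.sqrt (∑ j, ((t/2) ^ r) ^ 2 * ((nu j) ^ r * ‖star (v j) ⬝ᵥ (specOp v ind *ᵥ f)‖ ^ 2)) := by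
      rw [← Finset.mul_sum, sqrt_factor _ (by positivity)]
    rw [hfact, hM]
    apply Real.sqrt_le_sqrt
    apply Finset.sum_le_sum
    intro j _
    rw [coef_specOp v hv]
    by_cases h : t * Real.sqrt (nu j) ≤ 2
    · have hmin : min 1 (t * Real.sqrt (nu j) / 2) = t * Real.sqrt (nu j) / 2 := by
        rw [min_eq_right]; linarith
      simp only [hind, if_pos h, one_mul, hmin]
      have hEq : ((t/2) ^ r) ^ 2 * ((nu j) ^ r * ‖star (v j) ⬝ᵥ f‖ ^ 2)
          = (t * Real.sqrt (nu j) / 2) ^ (2*r) * ‖star (v j) ⬝ᵥ f‖ ^ 2 := by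
        have : (t * Real.sqrt (nu j) / 2) ^ (2*r) = (((t/2) ^ r) ^ 2) * (nu j) ^ r := by
          have e2 : (Real.sqrt (nu j)) ^ (2*r) = (nu j) ^ r := by
            rw [pow_mul, Real.sq_sqrt (hnu j)]
          have e3 : ((t/2):ℝ) ^ (2*r) = ((t/2) ^ r) ^ 2 := by
            rw [mul_comm 2 r, pow_mul]
          rw [show t * Real.sqrt (nu j) / 2 = t / 2 * Real.sqrt (nu j) by ring, mul_pow, e2, e3]
        rw [this]; ring
      rw [hEq]
    · simp only [hind, if_neg h, zero_mul, norm_zero]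
      have : (0:ℝ) ^ 2 = 0 := by norm_num
      rw [this, mul_zero, mul_zero]
      positivity
  calc cnorm2 (f - specOp v ind *ᵥ f)
        + (t/2) ^ r * cnorm2 ((Lpow v nu ((r : ℝ) / 2)) *ᵥ (specOp v ind *ᵥ f))
      ≤ M + M := add_le_add hpart1 hpart2
    _ = 2 * M := by ring

lemma M_le_omega (r : ℕ) (t : ℝ) (ht : 0 < t) (f : Fin N → ℂ)
    (sstar c0 : ℝ) (hsstar : |sstar| ≤ t) (hc0 : 0 ≤ c0)
    (hlow : ∀ j, c0 * min 1 (t * Real.sqrt (nu j) / 2)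
      ≤ ‖Complex.exp (((sstar * Real.sqrt (nu j) : ℝ) : ℂ) * Complex.I) - 1‖) :
    c0 ^ r * Real.sqrt (∑ j, (min 1 (t * Real.sqrt (nu j) / 2)) ^ (2*r)
        * ‖star (v j) ⬝ᵥ f‖ ^ 2) ≤ omegaMod v nu r f t := by
  have hval : c0 ^ r * Real.sqrt (∑ j, (min 1 (t * Real.sqrt (nu j) / 2)) ^ (2*r)
        * ‖star (v j) ⬝ᵥ f‖ ^ 2) ≤ cnorm2 (((Tmat v nu sstar - 1) ^ r) *ᵥ f) := by
    rw [omega_term_eq v hv nu]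
    have hfact : c0 ^ r * Real.sqrt (∑ j, (min 1 (t * Real.sqrt (nu j) / 2)) ^ (2*r)
          * ‖star (v j) ⬝ᵥ f‖ ^ 2)
        = Real.sqrt (∑ j, (c0 ^ r) ^ 2 * ((min 1 (t * Real.sqrt (nu j) / 2)) ^ (2*r)
          * ‖star (v j) ⬝ᵥ f‖ ^ 2)) := by
      rw [← Finset.mul_sum, sqrt_factor _ (by positivity)]
    rw [hfact]
    apply Real.sqrt_le_sqrt
    apply Finset.sum_le_sum
    intro j _
    have hminnn : (0:ℝ) ≤ min 1 (t * Real.sqrt (nu j) / 2) := by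
      apply le_min (by norm_num)
      positivity
    have h1 : (c0 * min 1 (t * Real.sqrt (nu j) / 2)) ^ 2
        ≤ ‖Complex.exp (((sstar * Real.sqrt (nu j) : ℝ) : ℂ) * Complex.I) - 1‖ ^ 2 :=
      pow_le_pow_left₀ (by positivity) (hlow j) 2
    have h2 : ((c0 * min 1 (t * Real.sqrt (nu j) / 2)) ^ 2) ^ r
        ≤ (‖Complex.exp (((sstar * Real.sqrt (nu j) : ℝ) : ℂ) * Complex.I) - 1‖ ^ 2) ^ r :=
      pow_le_pow_left₀ (by positivity) h1 r
    calc (c0 ^ r) ^ 2 * ((min 1 (t * Real.sqrt (nu j) / 2)) ^ (2*r) * ‖star (v j) ⬝ᵥ f‖ ^ 2)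
        = ((c0 * min 1 (t * Real.sqrt (nu j) / 2)) ^ 2) ^ r * ‖star (v j) ⬝ᵥ f‖ ^ 2 := by
          have e1 : ((c0 * min 1 (t * Real.sqrt (nu j) / 2)) ^ 2) ^ r
              = (c0 ^ r) ^ 2 * (min 1 (t * Real.sqrt (nu j) / 2)) ^ (2*r) := by
            ring
          rw [e1, mul_assoc]
      _ ≤ (‖Complex.exp (((sstar * Real.sqrt (nu j) : ℝ) : ℂ) * Complex.I) - 1‖ ^ 2) ^ r
            * ‖star (v j) ⬝ᵥ f‖ ^ 2 := mul_le_mul_of_nonneg_right h2 (by positivity)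
  calc c0 ^ r * Real.sqrt (∑ j, (min 1 (t * Real.sqrt (nu j) / 2)) ^ (2*r)
        * ‖star (v j) ⬝ᵥ f‖ ^ 2)
      ≤ cnorm2 (((Tmat v nu sstar - 1) ^ r) *ᵥ f) := hval
    _ ≤ omegaMod v nu r f t :=
        le_ciSup (omega_bdd v hv nu r t f) (⟨sstar, hsstar⟩ : {s : ℝ // |s| ≤ t})

end

lemma scalar_claim {N : ℕ} (hN : 1 ≤ N) (nu : Fin N → ℝ) (hnu : ∀ j, 0 ≤ nu j) :
    ∃ c0 : ℝ, 0 < c0 ∧ c0 ≤ 1 ∧ ∀ t : ℝ, 0 < t → ∃ sstar : ℝ, |sstar| ≤ t ∧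
      ∀ j, c0 * min 1 (t * Real.sqrt (nu j) / 2)
        ≤ ‖Complex.exp (((sstar * Real.sqrt (nu j) : ℝ) : ℂ) * Complex.I) - 1‖ := by
  haveI : Nonempty (Fin N) := Fin.pos_iff_nonempty.mp hN
  have hne : (Finset.univ : Finset (Fin N)).Nonempty := Finset.univ_nonempty
  obtain ⟨θM, hθMdef⟩ : ∃ x, x = Finset.univ.sup' hne (fun j => Real.sqrt (nu j)) := ⟨_, rfl⟩
  have hθle : ∀ j, Real.sqrt (nu j) ≤ θM := fun j => by
    rw [hθMdef]; exact Finset.le_sup' (fun j => Real.sqrt (nu j)) (Finset.mem_univ j)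
  have hθnn : ∀ j, 0 ≤ Real.sqrt (nu j) := fun j => Real.sqrt_nonneg _
  have hθM0 : 0 ≤ θM := le_trans (hθnn (Classical.arbitrary _)) (hθle _)
  obtain ⟨δ, hδdef⟩ : ∃ x, x = Finset.univ.inf' hne
      (fun j => if 0 < Real.sqrt (nu j) then Real.sqrt (nu j) / θM else 1) := ⟨_, rfl⟩
  have hδpos : 0 < δ := by
    rw [hδdef, Finset.lt_inf'_iff]
    intro j _
    by_cases h : 0 < Real.sqrt (nu j)
    · rw [if_pos h]
      exact div_pos h (lt_of_lt_of_le h (hθle j))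
    · rw [if_neg h]; norm_num
  have hδle : ∀ j, 0 < Real.sqrt (nu j) → δ ≤ Real.sqrt (nu j) / θM := by
    intro j h
    have h2 := Finset.inf'_le (fun j => if 0 < Real.sqrt (nu j) then Real.sqrt (nu j) / θM else 1)
      (Finset.mem_univ j)
    rw [if_pos h] at h2
    rw [hδdef]; exact h2
  refine ⟨min 1 ((3/2) * δ), by positivity, min_le_left _ _, ?_⟩
  intro t ht
  have hc0nn : (0:ℝ) ≤ min 1 ((3/2) * δ) := by positivity
  have hc01 : min 1 ((3/2) * δ) ≤ 1 := min_le_left _ _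
  have hc0δ : min 1 ((3/2) * δ) ≤ (3/2) * δ := min_le_right _ _
  have hs2' : (0:ℝ) ≤ 2/θM := div_nonneg (by norm_num) hθM0
  refine ⟨min t (2/θM), ?_, ?_⟩
  · rw [abs_of_nonneg (le_min ht.le hs2')]
    exact min_le_left _ _
  · intro j
    rcases (hθnn j).eq_or_lt with h0 | h0
    · have e : t * Real.sqrt (nu j) / 2 = 0 := by rw [← h0]; ring
      rw [e, min_eq_right zero_le_one, mul_zero]
      exact norm_nonneg _
    · have hθMpos : 0 < θM := lt_of_lt_of_le h0 (hθle j)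
      have hs2 : min t (2/θM) ≤ 2/θM := min_le_right _ _
      have hs0 : 0 < min t (2/θM) := lt_min ht (by positivity)
      have hx0 : 0 ≤ min t (2/θM) * Real.sqrt (nu j) := by positivity
      have hx2 : min t (2/θM) * Real.sqrt (nu j) ≤ 2 := by
        have h1 : min t (2/θM) * Real.sqrt (nu j) ≤ (2/θM) * Real.sqrt (nu j) :=
          mul_le_mul_of_nonneg_right hs2 (hθnn j)
        have h2 : (2/θM) * Real.sqrt (nu j) ≤ (2/θM) * θM :=
          mul_le_mul_of_nonneg_left (hθle j) (by positivity)
        have h3 : (2/θM) * θM = 2 := div_mul_cancel₀ 2 (ne_of_gt hθMpos)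
        linarith
      have hge := exp_norm_ge (min t (2/θM) * Real.sqrt (nu j)) hx0 hx2
      have hminnn : (0:ℝ) ≤ min 1 (t * Real.sqrt (nu j) / 2) :=
        le_min zero_le_one (by positivity)
      rcases le_or_gt t (2/θM) with hcase | hcase
      · have hseq : min t (2/θM) = t := min_eq_left hcase
        have h4 : min 1 ((3/2) * δ) * min 1 (t * Real.sqrt (nu j) / 2)
            ≤ 1 * (t * Real.sqrt (nu j) / 2) :=
          mul_le_mul hc01 (min_le_right _ _) hminnn zero_le_one
        have h5 : t * Real.sqrt (nu j) / 2 ≤ 3/4 * (t * Real.sqrt (nu j)) := by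
          nlinarith [mul_nonneg ht.le (hθnn j)]
        have h7 : 3/4 * (min t (2/θM) * Real.sqrt (nu j)) = 3/4 * (t * Real.sqrt (nu j)) := by
          rw [hseq]
        linarith
      · have hseq : min t (2/θM) = 2/θM := min_eq_right hcase.le
        have hkey : (3:ℝ)/2 * (Real.sqrt (nu j) / θM)
            = 3/4 * (min t (2/θM) * Real.sqrt (nu j)) := by
          rw [hseq]; field_simp; ring
        have h5 : min 1 ((3/2) * δ) * min 1 (t * Real.sqrt (nu j) / 2) ≤ min 1 ((3/2) * δ) := by
          have := mul_le_mul_of_nonneg_left (min_le_left 1 (t * Real.sqrt (nu j) / 2)) hc0nn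
          rwa [mul_one] at this
        have h6 : min 1 ((3/2) * δ) ≤ (3:ℝ)/2 * (Real.sqrt (nu j) / θM) := by
          have := hδle j h0
          nlinarith
        linarith

/-- for a symmetric positive semidefinite `L̃` (given through its spectral
data: an orthonormal eigenbasis `v` with nonnegative eigenvalues `ν`), there exist
constants `C_1, C_2 > 0`, depending only on `L̃` and `r`, such that for every `m ≥ 1`,
every `F ∈ ℂ^{N×m}` and every `t > 0`:
`C_1 · 𝒲_r(F, t) ≤ 𝒦_r(F, t) ≤ C_2 · 𝒲_r(F, t)`. -/
theorem stmt9 (N : ℕ) (hN : 1 ≤ N) (r : ℕ)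
    (v : Fin N → Fin N → ℂ)
    (hv : ∀ i j, star (v i) ⬝ᵥ v j = if i = j then 1 else 0)
    (nu : Fin N → ℝ) (hnu : ∀ j, 0 ≤ nu j) :
    ∃ C1 C2 : ℝ, 0 < C1 ∧ 0 < C2 ∧
      ∀ (m : ℕ), 1 ≤ m → ∀ (F : Matrix (Fin N) (Fin m) ℂ) (t : ℝ), 0 < t →
        C1 * Wcal v nu r F t ≤ Kcal v nu r F t ∧ Kcal v nu r F t ≤ C2 * Wcal v nu r F t := by
  obtain ⟨c0, hc0pos, hc0le1, hsc⟩ := scalar_claim hN nu hnu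
  refine ⟨(1/2) ^ r, 2 / c0 ^ r, by positivity, by positivity, ?_⟩
  intro m hm F t ht
  constructor
  · -- lower bound
    apply le_ciInf
    intro G
    have hcol : ∀ j : Fin m, (fun i => F i j - G i j)
        = ((fun i => F i j) - (fun i => G i j)) := fun j => rfl
    have hsum : Wcal v nu r F t
        ≤ ∑ j : Fin m, 2 ^ r * (cnorm2 ((fun i => F i j) - (fun i => G i j))
            + (t/2) ^ r * cnorm2 ((Lpow v nu ((r : ℝ) / 2)) *ᵥ (fun i => G i j))) :=
      Finset.sum_le_sum fun j _ => omega_le_split v hv nu hnu r t ht _ _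
    have hre : ∑ j : Fin m, 2 ^ r * (cnorm2 ((fun i => F i j) - (fun i => G i j))
            + (t/2) ^ r * cnorm2 ((Lpow v nu ((r : ℝ) / 2)) *ᵥ (fun i => G i j)))
        = 2 ^ r * (∑ j : Fin m, cnorm2 (fun i => F i j - G i j) +
            (t / 2) ^ r * ∑ j : Fin m, cnorm2 ((Lpow v nu ((r : ℝ) / 2)) *ᵥ (fun i => G i j))) := by
      rw [← Finset.mul_sum]
      congr 1
      rw [Finset.sum_add_distrib, ← Finset.mul_sum]
      congr 1
    rw [hre] at hsum
    calc (1/2 : ℝ) ^ r * Wcal v nu r F t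
        ≤ (1/2 : ℝ) ^ r * (2 ^ r * (∑ j : Fin m, cnorm2 (fun i => F i j - G i j) +
            (t / 2) ^ r * ∑ j : Fin m, cnorm2 ((Lpow v nu ((r : ℝ) / 2)) *ᵥ (fun i => G i j)))) :=
          mul_le_mul_of_nonneg_left hsum (by positivity)
      _ = ∑ j : Fin m, cnorm2 (fun i => F i j - G i j) +
            (t / 2) ^ r * ∑ j : Fin m, cnorm2 ((Lpow v nu ((r : ℝ) / 2)) *ᵥ (fun i => G i j)) := by
          rw [← mul_assoc, ← mul_pow]
          norm_num
  · -- upper bound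
    obtain ⟨sstar, hsstar, hlow⟩ := hsc t ht
    choose g hg using fun j : Fin m => K_choice v hv nu hnu r t ht (fun i => F i j)
    have hbdd : BddBelow (Set.range fun G : Matrix (Fin N) (Fin m) ℂ =>
        (∑ j, cnorm2 (fun i => F i j - G i j) +
          (t / 2) ^ r * ∑ j, cnorm2 ((Lpow v nu ((r : ℝ) / 2)).mulVec (fun i => G i j)))) := by
      refine ⟨0, ?_⟩
      rintro x ⟨G, rfl⟩
      exact add_nonneg (Finset.sum_nonneg fun _ _ => cnorm2_nonneg _)
        (mul_nonneg (by positivity) (Finset.sum_nonneg fun _ _ => cnorm2_nonneg _))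
    have hKle := ciInf_le hbdd (Matrix.of fun i j => g j i)
    have hval : (∑ j, cnorm2 (fun i => F i j - (Matrix.of fun i j => g j i) i j) +
          (t / 2) ^ r * ∑ j, cnorm2 ((Lpow v nu ((r : ℝ) / 2)).mulVec
            (fun i => (Matrix.of fun i j => g j i) i j)))
        = ∑ j : Fin m, (cnorm2 ((fun i => F i j) - g j) +
            (t/2) ^ r * cnorm2 ((Lpow v nu ((r : ℝ) / 2)) *ᵥ g j)) := by
      rw [Finset.sum_add_distrib, ← Finset.mul_sum]
      rfl
    rw [hval] at hKle
    have hfin : ∑ j : Fin m, (cnorm2 ((fun i => F i j) - g j) +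
            (t/2) ^ r * cnorm2 ((Lpow v nu ((r : ℝ) / 2)) *ᵥ g j))
        ≤ (2 / c0 ^ r) * Wcal v nu r F t := by
      unfold Wcal
      rw [Finset.mul_sum]
      apply Finset.sum_le_sum
      intro j _
      have h1 := M_le_omega v hv nu r t ht (fun i => F i j) sstar c0 hsstar hc0pos.le hlow
      have h2 : cnorm2 ((fun i => F i j) - g j) +
            (t/2) ^ r * cnorm2 ((Lpow v nu ((r : ℝ) / 2)) *ᵥ g j)
          ≤ 2 * Real.sqrt (∑ k, (min 1 (t * Real.sqrt (nu k) / 2)) ^ (2*r)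
            * ‖star (v k) ⬝ᵥ (fun i => F i j)‖ ^ 2) := hg j
      have h3 : 2 * Real.sqrt (∑ k, (min 1 (t * Real.sqrt (nu k) / 2)) ^ (2*r)
            * ‖star (v k) ⬝ᵥ (fun i => F i j)‖ ^ 2)
          ≤ 2 / c0 ^ r * omegaMod v nu r (fun i => F i j) t := by
        rw [div_mul_eq_mul_div, le_div_iff₀ (by positivity : (0:ℝ) < c0 ^ r)]
        nlinarith [h1]
      linarith
    exact le_trans hKle hfin
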